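/- Let h, F : ℝ → ℝ be differentiable. On ℝ⁵ with coordinates (ρ, u, v, p, S), define the vector fields X_h(ρ,u,v,p,S) = (−2ρ h(S), u h(S), v h(S), 0, 0) and X_F(ρ,u,v,p,S) = (0, 0, 0, 0, F(S)). Then the Lie bracket satisfies [X_h, X_F] = −X_{h₁}, where h₁(S) = h'(S)F(S); that is, [X_h, X_F](ρ,u,v,p,S) = (2ρ h'(S)F(S), −u h'(S)F(S), −v h'(S)F(S), 0, 0) identically on ℝ⁵. -/
import Mathlib


/-- The Lie bracket of two vector fields on `ℝⁿ`:
`[V,W](z) = DW(z)·V(z) − DV(z)·W(z)`. -/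
noncomputable def lieBr {n : ℕ} (V W : (Fin n → ℝ) → (Fin n → ℝ)) :
    (Fin n → ℝ) → (Fin n → ℝ) :=
  fun z => fderiv ℝ W z (V z) - fderiv ℝ V z (W z)

/-- Generator `X_h` of the Munk–Prim projective equivalence transformations,
with coordinates `(ρ, u, v, p, S)`. -/
def Xh (h : ℝ → ℝ) : (Fin 5 → ℝ) → (Fin 5 → ℝ) := fun z =>
  ![-2 * z 0 * h (z 4), z 1 * h (z 4), z 2 * h (z 4), 0, 0]

/-- Generator `X_F` of the relabelings of the entropy. -/
def XF (F : ℝ → ℝ) : (Fin 5 → ℝ) → (Fin 5 → ℝ) := fun z =>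
  ![0, 0, 0, 0, F (z 4)]

noncomputable abbrev prj (i : Fin 5) : (Fin 5 → ℝ) →L[ℝ] ℝ :=
  ContinuousLinearMap.proj i

open ContinuousLinearMap in
noncomputable def DXh (h : ℝ → ℝ) (z : Fin 5 → ℝ) : (Fin 5 → ℝ) →L[ℝ] (Fin 5 → ℝ) :=
  pi ![(-2 * z 0) • (deriv h (z 4) • prj 4) + h (z 4) • ((-2 : ℝ) • prj 0),
      (z 1) • (deriv h (z 4) • prj 4) + h (z 4) • prj 1,
      (z 2) • (deriv h (z 4) • prj 4) + h (z 4) • prj 2,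
      0, 0]

open ContinuousLinearMap in
noncomputable def DXF (F : ℝ → ℝ) (z : Fin 5 → ℝ) : (Fin 5 → ℝ) →L[ℝ] (Fin 5 → ℝ) :=
  pi ![0, 0, 0, 0, deriv F (z 4) • prj 4]

lemma hXh (h : ℝ → ℝ) (hh : Differentiable ℝ h) (z : Fin 5 → ℝ) :
    HasFDerivAt (Xh h) (DXh h z) z := by
  have h4 : HasFDerivAt (fun z : Fin 5 → ℝ => h (z 4))
      (deriv h (z 4) • prj 4) z :=
    (hh (z 4)).hasDerivAt.comp_hasFDerivAt (f := fun z : Fin 5 → ℝ => z 4)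
      z (prj 4).hasFDerivAt
  rw [hasFDerivAt_pi']
  intro i
  fin_cases i
  · show HasFDerivAt (fun x : Fin 5 → ℝ => -2 * x 0 * h (x 4)) _ z
    exact HasFDerivAt.congr_fderiv (((prj 0).hasFDerivAt.const_mul (-2)).mul h4)
      (by ext v; simp [DXh])
  · show HasFDerivAt (fun x : Fin 5 → ℝ => x 1 * h (x 4)) _ z
    exact HasFDerivAt.congr_fderiv ((prj 1).hasFDerivAt.mul h4)
      (by ext v; simp [DXh])
  · show HasFDerivAt (fun x : Fin 5 → ℝ => x 2 * h (x 4)) _ z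
    exact HasFDerivAt.congr_fderiv ((prj 2).hasFDerivAt.mul h4)
      (by ext v; simp [DXh])
  · show HasFDerivAt (fun _ : Fin 5 → ℝ => (0 : ℝ)) _ z
    exact HasFDerivAt.congr_fderiv (hasFDerivAt_const 0 z) (by ext v; simp [DXh])
  · show HasFDerivAt (fun _ : Fin 5 → ℝ => (0 : ℝ)) _ z
    exact HasFDerivAt.congr_fderiv (hasFDerivAt_const 0 z) (by ext v; simp [DXh])

lemma hXF (F : ℝ → ℝ) (hF : Differentiable ℝ F) (z : Fin 5 → ℝ) :
    HasFDerivAt (XF F) (DXF F z) z := by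
  rw [hasFDerivAt_pi']
  intro i
  have h0 : ∀ j : Fin 5, HasFDerivAt (fun _ : Fin 5 → ℝ => (0 : ℝ))
      ((prj j).comp (DXF F z)) z → True := fun _ _ => trivial
  fin_cases i
  · show HasFDerivAt (fun _ : Fin 5 → ℝ => (0 : ℝ)) _ z
    exact HasFDerivAt.congr_fderiv (hasFDerivAt_const 0 z) (by ext v; simp [DXF])
  · show HasFDerivAt (fun _ : Fin 5 → ℝ => (0 : ℝ)) _ z
    exact HasFDerivAt.congr_fderiv (hasFDerivAt_const 0 z) (by ext v; simp [DXF])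
  · show HasFDerivAt (fun _ : Fin 5 → ℝ => (0 : ℝ)) _ z
    exact HasFDerivAt.congr_fderiv (hasFDerivAt_const 0 z) (by ext v; simp [DXF])
  · show HasFDerivAt (fun _ : Fin 5 → ℝ => (0 : ℝ)) _ z
    exact HasFDerivAt.congr_fderiv (hasFDerivAt_const 0 z) (by ext v; simp [DXF])
  · show HasFDerivAt (fun x : Fin 5 → ℝ => F (x 4)) _ z
    exact HasFDerivAt.congr_fderiv
      ((hF (z 4)).hasDerivAt.comp_hasFDerivAt (f := fun z : Fin 5 → ℝ => z 4)
        z (prj 4).hasFDerivAt)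
      (by ext v; simp [DXF])

/-- The commutation relation `[X_h, X_F] = −X_{h₁}` with `h₁ = h′F`. -/
theorem bracket_Xh_XF (h F : ℝ → ℝ) (hh : Differentiable ℝ h)
    (hF : Differentiable ℝ F) :
    lieBr (Xh h) (XF F) = fun z =>
      ![2 * z 0 * deriv h (z 4) * F (z 4),
        -(z 1 * deriv h (z 4) * F (z 4)),
        -(z 2 * deriv h (z 4) * F (z 4)), 0, 0] := by
  funext z
  have e1 := (hXh h hh z).fderiv
  have e2 := (hXF F hF z).fderiv
  funext i
  simp only [lieBr, e1, e2, Pi.sub_apply]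
  fin_cases i <;>
    simp [DXh, DXF, Xh, XF] <;> ring
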